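/- Let (G, L) be a list-coloring instance, B ⊆ V, Λ ⊆ V, and suppose there is a set S ⊆ V \ (B ∪ Λ) such that |L(v)| > d(v) + 1 for every v ∈ S and removing S disconnects B from Λ. Then for any two feasible partial colorings σ, τ of Λ and any coloring π of B, P[c(B) = π | σ] > 0 if and only if P[c(B) = π | τ] > 0. Consequently the error function E(μ_B^σ, μ_B^τ) is finite. -/

import Mathlib

def ProperColoring {V : Type*} (G : SimpleGraph V) {q : ℕ}
    (L : V → Finset (Fin q)) (c : V → Fin q) : Prop :=
  (∀ v, c v ∈ L v) ∧ ∀ u w, G.Adj u w → c u ≠ c w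

lemma greedy_extend {V : Type*} [Fintype V] {q : ℕ}
    (G : SimpleGraph V) [DecidableRel G.Adj] (L : V → Finset (Fin q)) :
    ∀ (T : Finset V) (c₀ : V → Fin q),
    (∀ v, v ∉ T → c₀ v ∈ L v) →
    (∀ u w, G.Adj u w → u ∉ T → w ∉ T → c₀ u ≠ c₀ w) →
    (∀ v ∈ T, G.degree v < (L v).card) →
    ∃ c, ProperColoring G L c ∧ ∀ v, v ∉ T → c v = c₀ v := by
  classical
  intro T
  induction T using Finset.induction_on with
  | empty =>
    intro c₀ h1 h2 _
    exact ⟨c₀, ⟨fun v => h1 v (by simp), fun u w h => h2 u w h (by simp) (by simp)⟩,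
      fun v _ => rfl⟩
  | @insert a T' ha ih =>
    intro c₀ h1 h2 h3
    have hcard : ((L a) \ (G.neighborFinset a).image c₀).Nonempty := by
      rw [Finset.sdiff_nonempty]
      intro hsub
      have hle := Finset.card_le_card hsub
      have h2' := Finset.card_image_le (s := G.neighborFinset a) (f := c₀)
      have h3' := h3 a (Finset.mem_insert_self a T')
      have hdeg : (G.neighborFinset a).card = G.degree a := rfl
      omega
    obtain ⟨x, hx⟩ := hcard
    rw [Finset.mem_sdiff] at hx
    set c₀' := Function.update c₀ a x with hc'
    have hupd : ∀ v, v ≠ a → c₀' v = c₀ v := fun v hv => Function.update_of_ne hv x c₀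
    have hupda : c₀' a = x := Function.update_self a x c₀
    obtain ⟨c, hc1, hc2⟩ := ih c₀'
      (by
        intro v hv
        by_cases hva : v = a
        · subst hva; rw [hupda]; exact hx.1
        · rw [hupd v hva]
          exact h1 v (by simp [hva, hv]))
      (by
        intro u w hadj hu hw
        by_cases hua : u = a
        · subst hua
          have hwa : w ≠ u := fun h => G.loopless.irrefl u (h ▸ hadj)
          rw [hupda, hupd w hwa]
          intro hcontra
          exact hx.2 (Finset.mem_image.mpr ⟨w, by simpa using hadj, hcontra.symm⟩)
        · by_cases hwa : w = a
          · subst hwa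
            rw [hupda, hupd u hua]
            intro hcontra
            exact hx.2 (Finset.mem_image.mpr ⟨u, by simpa using hadj.symm, hcontra⟩)
          · rw [hupd u hua, hupd w hwa]
            exact h2 u w hadj (by simp [hua, hu]) (by simp [hwa, hw]))
      (fun v hv => h3 v (Finset.mem_insert_of_mem hv))
    refine ⟨c, hc1, fun v hv => ?_⟩
    have hva : v ≠ a := fun h => hv (h ▸ Finset.mem_insert_self a T')
    have hvT' : v ∉ T' := fun h => hv (Finset.mem_insert_of_mem h)
    rw [hc2 v hvT', hupd v hva]

lemma transfer {V : Type*} [Fintype V] {q : ℕ}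
    (G : SimpleGraph V) [DecidableRel G.Adj]
    (L : V → Finset (Fin q)) (B Λ S : Set V)
    (hS : S ⊆ (B ∪ Λ)ᶜ)
    (hSdeg : ∀ v ∈ S, G.degree v + 1 < (L v).card)
    (hcut : ∀ u ∈ B, ∀ w ∈ Λ, ∀ p : G.Walk u w, ∃ s ∈ S, s ∈ p.support)
    (τ π : V → Fin q)
    (c₁ : V → Fin q) (h1 : ProperColoring G L c₁) (h1B : ∀ u ∈ B, c₁ u = π u)
    (c₂ : V → Fin q) (h2 : ProperColoring G L c₂) (h2Λ : ∀ u ∈ Λ, c₂ u = τ u) :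
    ∃ c, ProperColoring G L c ∧ (∀ u ∈ Λ, c u = τ u) ∧ ∀ u ∈ B, c u = π u := by
  classical
  set R : Set V := {v | ∃ b ∈ B, ∃ p : G.Walk b v, ∀ s ∈ S, s ∉ p.support} with hR
  have hBR : ∀ b ∈ B, b ∈ R := by
    intro b hb
    refine ⟨b, hb, SimpleGraph.Walk.nil, ?_⟩
    intro s hs hsup
    simp only [SimpleGraph.Walk.support_nil, List.mem_singleton] at hsup
    exact hS hs (Or.inl (hsup ▸ hb))
  have hRS : ∀ v ∈ R, v ∉ S := by
    rintro v ⟨b, hb, p, hp⟩ hvS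
    exact hp v hvS (SimpleGraph.Walk.end_mem_support p)
  have hΛR : ∀ v ∈ Λ, v ∉ R := by
    rintro v hv ⟨b, hb, p, hp⟩
    obtain ⟨s, hs, hsup⟩ := hcut b hb v hv p
    exact hp s hs hsup
  have hclose : ∀ u w, u ∈ R → G.Adj u w → w ∉ S → w ∈ R := by
    rintro u w ⟨b, hb, p, hp⟩ hadj hwS
    refine ⟨b, hb, p.concat hadj, ?_⟩
    intro s hs hsup
    rw [SimpleGraph.Walk.support_concat, List.mem_append] at hsup
    rcases hsup with h | h
    · exact hp s hs h
    · simp only [List.mem_singleton] at h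
      exact hwS (h ▸ hs)
  set c₀ : V → Fin q := fun v => if v ∈ R then c₁ v else c₂ v with hc₀
  obtain ⟨c, hc, hcoff⟩ := greedy_extend G L S.toFinset c₀
    (by
      intro v _
      simp only [hc₀]
      split
      · exact h1.1 v
      · exact h2.1 v)
    (by
      intro u w hadj hu hw
      simp only [Set.mem_toFinset] at hu hw
      simp only [hc₀]
      by_cases huR : u ∈ R
      · have hwR : w ∈ R := hclose u w huR hadj hw
        simp only [huR, hwR, if_pos]
        exact h1.2 u w hadj
      · by_cases hwR : w ∈ R
        · have huR' : u ∈ R := hclose w u hwR hadj.symm hu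
          exact absurd huR' huR
        · simp only [huR, hwR, if_neg, if_false]
          exact h2.2 u w hadj)
    (by
      intro v hv
      simp only [Set.mem_toFinset] at hv
      have := hSdeg v hv
      omega)
  refine ⟨c, hc, ?_, ?_⟩
  · intro u hu
    have huS : u ∉ S := fun h => hS h (Or.inr hu)
    have huR : u ∉ R := hΛR u hu
    rw [hcoff u (by simpa using huS)]
    simp only [hc₀, huR, if_neg, if_false]
    exact h2Λ u hu
  · intro u hu
    have huS : u ∉ S := fun h => hS h (Or.inl hu)
    have huR : u ∈ R := hBR u hu
    rw [hcoff u (by simpa using huS)]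
    simp only [hc₀, huR, if_pos]
    exact h1B u hu

theorem permissive_cut_positivity {V : Type*} [Fintype V] {q : ℕ}
    (G : SimpleGraph V) [DecidableRel G.Adj]
    (L : V → Finset (Fin q)) (B Λ S : Set V)
    (hS : S ⊆ (B ∪ Λ)ᶜ)
    (hSdeg : ∀ v ∈ S, G.degree v + 1 < (L v).card)
    (hcut : ∀ u ∈ B, ∀ w ∈ Λ, ∀ p : G.Walk u w, ∃ s ∈ S, s ∈ p.support)
    (σ τ : V → Fin q)
    (hσ : ∃ c, ProperColoring G L c ∧ ∀ u ∈ Λ, c u = σ u)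
    (hτ : ∃ c, ProperColoring G L c ∧ ∀ u ∈ Λ, c u = τ u)
    (π : V → Fin q) (hπ : ∀ u ∈ B, π u ∈ L u) :
    (0 < Nat.card {c : V → Fin q //
        ProperColoring G L c ∧ (∀ u ∈ Λ, c u = σ u) ∧ ∀ u ∈ B, c u = π u} ↔
     0 < Nat.card {c : V → Fin q //
        ProperColoring G L c ∧ (∀ u ∈ Λ, c u = τ u) ∧ ∀ u ∈ B, c u = π u}) := by
  classical
  have hpos : ∀ (ρ : V → Fin q),
      (0 < Nat.card {c : V → Fin q //
        ProperColoring G L c ∧ (∀ u ∈ Λ, c u = ρ u) ∧ ∀ u ∈ B, c u = π u}) ↔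
      (∃ c, ProperColoring G L c ∧ (∀ u ∈ Λ, c u = ρ u) ∧ ∀ u ∈ B, c u = π u) := by
    intro ρ
    rw [Nat.card_pos_iff]
    constructor
    · rintro ⟨⟨⟨c, hc⟩⟩, _⟩; exact ⟨c, hc⟩
    · rintro ⟨c, hc⟩; exact ⟨⟨⟨c, hc⟩⟩, inferInstance⟩
  rw [hpos σ, hpos τ]
  constructor
  · rintro ⟨c₁, h1, h1Λ, h1B⟩
    obtain ⟨c₂, h2, h2Λ⟩ := hτ
    exact transfer G L B Λ S hS hSdeg hcut τ π c₁ h1 h1B c₂ h2 h2Λ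
  · rintro ⟨c₁, h1, h1Λ, h1B⟩
    obtain ⟨c₂, h2, h2Λ⟩ := hσ
    exact transfer G L B Λ S hS hSdeg hcut σ π c₁ h1 h1B c₂ h2 h2Λ
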